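/- (Semi-monotonicity of normal default theories.) Let Δ=(D,W) and Δ'=(D',W) be normal propositional default theories with D ⊆ D'. Then for every extension E of Δ there exists an extension E' of Δ' such that E ⊆ E'. -/

import Mathlib

/-! Propositional formulas -/

inductive Form (V : Type) : Type
  | atom : V → Form V
  | tru  : Form V
  | fals : Form V
  | neg  : Form V → Form V
  | conj : Form V → Form V → Form V
  | disj : Form V → Form V → Form V

/-- Satisfaction of a formula by a valuation. -/
def Form.sat {V : Type} (v : V → Prop) : Form V → Prop
  | .atom a => v a
  | .tru => True
  | .fals => False
  | .neg φ => ¬ Form.sat v φ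
  | .conj φ ψ => Form.sat v φ ∧ Form.sat v ψ
  | .disj φ ψ => Form.sat v φ ∨ Form.sat v ψ

/-- Logical logClosure `T*` of a set of formulas. -/
def logClosure {V : Type} (T : Set (Form V)) : Set (Form V) :=
  { φ | ∀ v : V → Prop, (∀ ψ ∈ T, Form.sat v ψ) → Form.sat v φ }

/-- A default rule `α : β₁,…,β_m / γ` (`pre = none` means the prerequisite is missing). -/
structure Default (V : Type) : Type where
  pre   : Option (Form V)
  justs : List (Form V)
  concl : Form V

/-- The stage sets `E_i` relative to a candidate extension `E`:
`E_0 = W`, `E_{i+1} = E_i* ∪ {γ | α:β₁,…,β_m/γ ∈ D, α ∈ E_i, ¬β₁ ∉ E, …, ¬β_m ∉ E}`. -/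
def extStage {V : Type} (D : Set (Default V)) (W : Set (Form V)) (E : Set (Form V)) :
    ℕ → Set (Form V)
  | 0 => W
  | i + 1 =>
      logClosure (extStage D W E i) ∪
        { φ | ∃ d ∈ D, d.concl = φ ∧ (∀ a ∈ d.pre, a ∈ extStage D W E i) ∧
              ∀ b ∈ d.justs, Form.neg b ∉ E }

/-- `E` is an extension of the default theory `(D, W)`. -/
def IsExtension {V : Type} (D : Set (Default V)) (W : Set (Form V)) (E : Set (Form V)) : Prop :=
  E = ⋃ i, extStage D W E i

/-- `(D, W) ⊨ φ`: every extension of `(D, W)` contains `φ`. -/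
def entails {V : Type} (D : Set (Default V)) (W : Set (Form V)) (φ : Form V) : Prop :=
  ∀ E, IsExtension D W E → φ ∈ E

/-! Literals -/

/-- A literal: a letter together with a sign (`pos = true` means a positive literal). -/
structure Lit (V : Type) : Type where
  letter : V
  pos : Bool

/-- The formula corresponding to a literal. -/
def Lit.toForm {V : Type} (l : Lit V) : Form V :=
  if l.pos then Form.atom l.letter else Form.neg (Form.atom l.letter)

/-- Negation of a literal (so that `¬¬a = a`). -/
def Lit.negate {V : Type} (l : Lit V) : Lit V := ⟨l.letter, !l.pos⟩

/-- A set of literals is consistent if it contains no complementary pair. -/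
def LitConsistent {V : Type} (S : Set (Lit V)) : Prop := ∀ l ∈ S, l.negate ∉ S

/-! Normal mixed unary (NMU) default theories -/

/-- An NMU default `α : β / β` with `α` empty or a single literal and `β` a single literal. -/
structure NMUDefault (V : Type) : Type where
  pre : Option (Lit V)
  concl : Lit V

/-- The general default rule corresponding to an NMU default. -/
def NMUDefault.toDefault {V : Type} (d : NMUDefault V) : Default V :=
  ⟨d.pre.map Lit.toForm, [d.concl.toForm], d.concl.toForm⟩

/-- `E` is an extension of the NMU theory `(D, W)`. -/
def NMU.IsExtension {V : Type} (D : Set (NMUDefault V)) (W : Set (Lit V))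
    (E : Set (Form V)) : Prop :=
  _root_.IsExtension (NMUDefault.toDefault '' D) (Lit.toForm '' W) E

/-- The NMU theory `(D, W)` entails the literal `l`. -/
def NMU.entails {V : Type} (D : Set (NMUDefault V)) (W : Set (Lit V)) (l : Lit V) : Prop :=
  _root_.entails (NMUDefault.toDefault '' D) (Lit.toForm '' W) l.toForm

/-- An NMU theory is normal unary (NU) if every nonempty prerequisite is positive. -/
def IsNU {V : Type} (D : Set (NMUDefault V)) : Prop :=
  ∀ d ∈ D, ∀ p ∈ d.pre, p.pos = true

/-! Atomic dependency graph -/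

/-- Edge `(x, y)` of the atomic dependency graph: `x` occurs in the prerequisite and `y`
in the consequent of some default of `D`. -/
def depEdge {V : Type} (D : Set (NMUDefault V)) (x y : V) : Prop :=
  ∃ d ∈ D, (∃ p ∈ d.pre, p.letter = x) ∧ d.concl.letter = y

/-- There is a path from `x` to `y` in the atomic dependency graph. -/
def depReach {V : Type} (D : Set (NMUDefault V)) : V → V → Prop :=
  Relation.ReflTransGen (depEdge D)

/-- A set of literals `S` influences a literal `l`. -/
def influences {V : Type} (D : Set (NMUDefault V)) (S : Set (Lit V)) (l : Lit V) : Prop :=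
  ∃ t ∈ S, depReach D t.letter l.letter

/-- A default rule is normal if its consequent is identical to its single justification. -/
def Default.IsNormal {V : Type} (d : Default V) : Prop := d.justs = [d.concl]

namespace SemiMonoAux

variable {V : Type}

/-- A valuation satisfies a set of formulas. -/
def Sat (v : V → Prop) (T : Set (Form V)) : Prop := ∀ ψ ∈ T, Form.sat v ψ

lemma sat_logClosure {v : V → Prop} {T : Set (Form V)} (h : Sat v T) :
    Sat v (logClosure T) := fun _ hψ => hψ v h

lemma subset_logClosure {T : Set (Form V)} : T ⊆ logClosure T :=
  fun φ hφ _ hv => hv φ hφ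

lemma logClosure_mono {T S : Set (Form V)} (h : T ⊆ S) : logClosure T ⊆ logClosure S :=
  fun _ hφ v hv => hφ v (fun ψ hψ => hv ψ (h hψ))

lemma logClosure_idem {T : Set (Form V)} : logClosure (logClosure T) = logClosure T := by
  apply subset_antisymm
  · exact fun φ hφ v hv => hφ v (sat_logClosure hv)
  · exact subset_logClosure

lemma unsat_logClosure {T : Set (Form V)} (h : ¬ ∃ v, Sat v T) :
    logClosure T = Set.univ :=
  Set.eq_univ_of_forall fun _ v hv => absurd ⟨v, hv⟩ h

lemma finite_subset_mono_iUnion {α : Type*} {s : Set α} (hs : s.Finite) {F : ℕ → Set α}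
    (hF : Monotone F) (h : s ⊆ ⋃ i, F i) : ∃ N, s ⊆ F N := by
  classical
  revert h
  refine Set.Finite.induction_on (motive := fun s _ => s ⊆ ⋃ i, F i → ∃ N, s ⊆ F N) s hs ?_ ?_
  · intro _; exact ⟨0, by simp⟩
  · intro a t ha htfin ih h
    obtain ⟨N, hN⟩ := ih (fun x hx => h (Set.mem_insert_of_mem _ hx))
    obtain ⟨M, hM⟩ := Set.mem_iUnion.mp (h (Set.mem_insert _ _))
    exact ⟨max N M, Set.insert_subset_iff.mpr
      ⟨hF (le_max_right N M) hM, hN.trans (hF (le_max_left N M))⟩⟩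

lemma extStage_succ_mono (D : Set (Default V)) (W E : Set (Form V)) :
    ∀ i, extStage D W E i ⊆ extStage D W E (i + 1) := by
  intro i
  induction i with
  | zero => exact fun x hx => Or.inl (subset_logClosure hx)
  | succ i ih =>
    intro φ hφ
    rcases hφ with hφ | ⟨d, hd, rfl, hpre, hjust⟩
    · exact Or.inl (logClosure_mono ih hφ)
    · exact Or.inr ⟨d, hd, rfl, fun a ha => ih (hpre a ha), hjust⟩

lemma extStage_monotone (D : Set (Default V)) (W E : Set (Form V)) :
    Monotone (extStage D W E) :=
  monotone_nat_of_le_succ (extStage_succ_mono D W E)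

lemma stage_subset_ext {D : Set (Default V)} {W E : Set (Form V)}
    (hE : IsExtension D W E) (i : ℕ) : extStage D W E i ⊆ E := by
  intro x hx; rw [hE]; exact Set.mem_iUnion.mpr ⟨i, hx⟩

lemma ext_eq_closure {D : Set (Default V)} {W E : Set (Form V)}
    (hE : IsExtension D W E) (hD : D.Finite) :
    E = logClosure (W ∪ (E ∩ (Default.concl '' D))) := by
  have hstE := stage_subset_ext hE
  apply subset_antisymm
  · have key : ∀ i, extStage D W E i ⊆ logClosure (W ∪ (E ∩ (Default.concl '' D))) := by
      intro i
      induction i with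
      | zero => exact Set.subset_union_left.trans subset_logClosure
      | succ i ih =>
        intro φ hφ
        rcases hφ with hφ | ⟨d, hd, rfl, hpre, hjust⟩
        · exact (logClosure_idem ▸ logClosure_mono ih) hφ
        · exact subset_logClosure (Or.inr ⟨hstE (i + 1) (Or.inr ⟨d, hd, rfl, hpre, hjust⟩),
            Set.mem_image_of_mem _ hd⟩)
    intro x hx
    rw [hE] at hx
    obtain ⟨i, hi⟩ := Set.mem_iUnion.mp hx
    exact key i hi
  · have hCfin : (E ∩ (Default.concl '' D)).Finite :=
      (hD.image _).subset Set.inter_subset_right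
    have hCsub : E ∩ (Default.concl '' D) ⊆ ⋃ i, extStage D W E i := by
      intro x hx; rw [← hE]; exact hx.1
    obtain ⟨N, hN⟩ := finite_subset_mono_iUnion hCfin (extStage_monotone D W E) hCsub
    have hWN : W ⊆ extStage D W E N := extStage_monotone D W E (Nat.zero_le N)
    have hall : W ∪ (E ∩ (Default.concl '' D)) ⊆ extStage D W E N :=
      Set.union_subset hWN hN
    exact (logClosure_mono hall).trans (fun x hx => hstE (N + 1) (Or.inl hx))

lemma ext_closed {D : Set (Default V)} {W E : Set (Form V)}
    (hE : IsExtension D W E) (hD : D.Finite) : logClosure E = E := by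
  have h := ext_eq_closure hE hD
  conv_lhs => rw [h]
  rw [logClosure_idem, ← h]

lemma ext_sat {D : Set (Default V)} {W E : Set (Form V)}
    (hE : IsExtension D W E) (hD : D.Finite) (hnormD : ∀ d ∈ D, d.IsNormal)
    (hW : ∃ v, Sat v W) : ∃ v, Sat v E := by
  by_contra hc
  have hEeq := ext_eq_closure hE hD
  have hEuniv : E = Set.univ := by
    rw [hEeq]
    apply unsat_logClosure
    rintro ⟨v, hv⟩
    exact hc ⟨v, by rw [hEeq]; exact sat_logClosure hv⟩
  have hkey : ∀ i, extStage D W E i ⊆ logClosure W := by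
    intro i
    induction i with
    | zero => exact subset_logClosure
    | succ i ih =>
      intro φ hφ
      rcases hφ with hφ | ⟨d, hd, rfl, hpre, hjust⟩
      · exact (logClosure_idem ▸ logClosure_mono ih) hφ
      · exact absurd (hEuniv ▸ Set.mem_univ (Form.neg d.concl))
          (hjust d.concl (by rw [hnormD d hd]; exact List.mem_singleton_self _))
  obtain ⟨v, hv⟩ := hW
  have hfals : Form.fals ∈ E := hEuniv ▸ Set.mem_univ _
  rw [hE] at hfals
  obtain ⟨i, hi⟩ := Set.mem_iUnion.mp hfals
  simpa [Form.sat] using hkey i hi v hv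

open Classical in
/-- One greedy step: apply some applicable default of `D'` whose conclusion is
consistent with the current (closed) set. -/
noncomputable def gstep (D' : Set (Default V)) (F : Set (Form V)) : Set (Form V) :=
  if h : ∃ d, d ∈ D' ∧ (∀ a ∈ d.pre, a ∈ F) ∧ d.concl ∉ F ∧
      (∃ v, Sat v (insert d.concl F))
  then logClosure (insert h.choose.concl F) else F

/-- Greedy chain starting from `E`. -/
noncomputable def chain (D' : Set (Default V)) (E : Set (Form V)) : ℕ → Set (Form V)
  | 0 => E
  | n + 1 => gstep D' (chain D' E n)

lemma gstep_subset {D' : Set (Default V)} {F : Set (Form V)} : F ⊆ gstep D' F := by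
  unfold gstep; split
  · exact fun x hx => subset_logClosure (Set.mem_insert_of_mem _ hx)
  · exact subset_rfl

lemma gstep_closed {D' : Set (Default V)} {F : Set (Form V)}
    (h : logClosure F = F) : logClosure (gstep D' F) = gstep D' F := by
  unfold gstep; split
  · exact logClosure_idem
  · exact h

lemma gstep_sat {D' : Set (Default V)} {F : Set (Form V)}
    (h : ∃ v, Sat v F) : ∃ v, Sat v (gstep D' F) := by
  unfold gstep; split
  · next h' =>
    obtain ⟨v, hv⟩ := h'.choose_spec.2.2.2
    exact ⟨v, sat_logClosure hv⟩
  · exact h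

lemma gstep_ne {D' : Set (Default V)} {F : Set (Form V)} (hne : gstep D' F ≠ F) :
    ∃ γ ∈ Default.concl '' D', γ ∉ F ∧ γ ∈ gstep D' F := by
  by_cases h : ∃ d, d ∈ D' ∧ (∀ a ∈ d.pre, a ∈ F) ∧ d.concl ∉ F ∧
      (∃ v, Sat v (insert d.concl F))
  · refine ⟨h.choose.concl, Set.mem_image_of_mem _ h.choose_spec.1,
      h.choose_spec.2.2.1, ?_⟩
    simp only [gstep, dif_pos h]
    exact subset_logClosure (Set.mem_insert _ _)
  · exact absurd (by simp only [gstep, dif_neg h]) hne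

lemma chain_monotone {D' : Set (Default V)} {E : Set (Form V)} :
    Monotone (chain D' E) :=
  monotone_nat_of_le_succ fun _ => gstep_subset

lemma chain_closed {D' : Set (Default V)} {E : Set (Form V)}
    (hE : logClosure E = E) : ∀ n, logClosure (chain D' E n) = chain D' E n
  | 0 => hE
  | n + 1 => gstep_closed (chain_closed hE n)

lemma chain_sat {D' : Set (Default V)} {E : Set (Form V)}
    (hE : ∃ v, Sat v E) : ∀ n, ∃ v, Sat v (chain D' E n)
  | 0 => hE
  | n + 1 => gstep_sat (chain_sat hE n)

lemma chain_stab {D' : Set (Default V)} {E : Set (Form V)} (hD' : D'.Finite) :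
    ∃ m, chain D' E (m + 1) = chain D' E m := by
  by_contra hc
  push_neg at hc
  have key : ∀ n, ∃ γ ∈ Default.concl '' D',
      γ ∉ chain D' E n ∧ γ ∈ chain D' E (n + 1) := fun n => gstep_ne (hc n)
  set s : ℕ → Set (Form V) := fun n => Default.concl '' D' ∩ chain D' E n with hs
  have hfin : ∀ n, (s n).Finite := fun n => (hD'.image _).subset Set.inter_subset_left
  have hss : ∀ n, s n ⊂ s (n + 1) := by
    intro n
    obtain ⟨γ, hγD, hγn, hγn1⟩ := key n
    constructor
    · exact Set.inter_subset_inter_right _ (chain_monotone (Nat.le_succ n))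
    · intro hsubs
      exact hγn (hsubs ⟨hγD, hγn1⟩).2
  have hcard : StrictMono fun n => (s n).ncard :=
    strictMono_nat_of_lt_succ fun n => Set.ncard_lt_ncard (hss n) (hfin (n + 1))
  have h1 : (Default.concl '' D').ncard + 1 ≤
      (s ((Default.concl '' D').ncard + 1)).ncard := hcard.le_apply
  have h2 : (s ((Default.concl '' D').ncard + 1)).ncard ≤ (Default.concl '' D').ncard :=
    Set.ncard_le_ncard Set.inter_subset_left (hD'.image _)
  omega

lemma chain_stable_after {D' : Set (Default V)} {E : Set (Form V)} {m : ℕ}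
    (hm : chain D' E (m + 1) = chain D' E m) :
    ∀ n, m ≤ n → chain D' E n = chain D' E m := by
  intro n hn
  induction n with
  | zero => rw [Nat.le_zero.mp hn]
  | succ n ih =>
    rcases Nat.eq_or_lt_of_le hn with h | h
    · rw [← h]
    · have h' := ih (Nat.lt_succ_iff.mp h)
      show gstep D' (chain D' E n) = chain D' E m
      rw [h']
      exact hm

end SemiMonoAux

/-- Semi-monotonicity of normal default theories: if `D ⊆ D'` and both theories are normal,
then every extension of `(D, W)` is contained in some extension of `(D', W)`. -/
theorem semi_monotonicity {V : Type} (D D' : Set (Default V)) (W : Set (Form V))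
    (hD' : D'.Finite) (hW : W.Finite) (hsub : D ⊆ D')
    (hnorm : ∀ d ∈ D', d.IsNormal)
    (E : Set (Form V)) (hE : IsExtension D W E) :
    ∃ E', IsExtension D' W E' ∧ E ⊆ E' := by
  classical
  open SemiMonoAux in
  by_cases hWsat : ∃ v : V → Prop, Sat v W
  case neg =>
    refine ⟨Set.univ, ?_, Set.subset_univ E⟩
    apply subset_antisymm
    · intro φ _
      have hφ : φ ∈ logClosure W := fun v hv => absurd ⟨v, hv⟩ hWsat
      exact Set.mem_iUnion.mpr ⟨1, Or.inl hφ⟩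
    · exact Set.subset_univ _
  case pos =>
    have hD : D.Finite := hD'.subset hsub
    have hnormD : ∀ d ∈ D, d.IsNormal := fun d hd => hnorm d (hsub hd)
    have hstE : ∀ i, extStage D W E i ⊆ E := stage_subset_ext hE
    have hEeq := ext_eq_closure hE hD
    have hEclosed : logClosure E = E := ext_closed hE hD
    have hEsat : ∃ v, Sat v E := ext_sat hE hD hnormD hWsat
    obtain ⟨m, hm⟩ := chain_stab (E := E) hD'
    set E' := chain D' E m with hE'def
    have hE'closed : logClosure E' = E' := chain_closed hEclosed m
    have hE'sat : ∃ v, Sat v E' := chain_sat hEsat m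
    have hchain_le : ∀ n, chain D' E n ⊆ E' := by
      intro n
      rcases le_total n m with h | h
      · exact chain_monotone h
      · rw [chain_stable_after hm n h]
    have hEE' : E ⊆ E' := hchain_le 0
    -- no default of D' is applicable to E' anymore
    have hnoapp : ¬ ∃ d, d ∈ D' ∧ (∀ a ∈ d.pre, a ∈ E') ∧ d.concl ∉ E' ∧
        (∃ v, Sat v (insert d.concl E')) := by
      intro h
      have heq : chain D' E (m + 1) = logClosure (insert h.choose.concl E') := by
        show gstep D' E' = _
        simp only [gstep, dif_pos h]
      have hseteq : logClosure (insert h.choose.concl E') = E' := heq.symm.trans hm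
      have hc : h.choose.concl ∈ E' := by
        have h1 : h.choose.concl ∈ logClosure (insert h.choose.concl E') :=
          subset_logClosure (Set.mem_insert _ _)
        rw [hseteq] at h1
        exact h1
      exact h.choose_spec.2.2.1 hc
    -- negated conclusions already in E' are the only blockers
    have hnegmem : ∀ d ∈ D', (∀ a ∈ d.pre, a ∈ E') → d.concl ∉ E' →
        Form.neg d.concl ∈ E' := by
      intro d hd hpre hc
      have hunsat : ¬ ∃ v, Sat v (insert d.concl E') :=
        fun hs => hnoapp ⟨d, hd, hpre, hc, hs⟩
      rw [← hE'closed]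
      intro v hv
      show Form.sat v (Form.neg d.concl)
      simp only [Form.sat]
      intro hsc
      exact hunsat ⟨v, fun ψ hψ => hψ.elim (fun h => h ▸ hsc) (hv ψ)⟩
    -- consistency: negations of members are not members
    have hnotneg : ∀ φ ∈ E', Form.neg φ ∉ E' := by
      intro φ hφ hneg
      obtain ⟨v, hv⟩ := hE'sat
      have h1 := hv _ hφ
      have h2 := hv _ hneg
      simp only [Form.sat] at h2
      exact h2 h1
    -- the stages of E w.r.t. (D, W) are contained in stages of E' w.r.t. (D', W)
    have hDD' : ∀ i, extStage D W E i ⊆ extStage D' W E' i := by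
      intro i
      induction i with
      | zero => exact fun x hx => hx
      | succ i ih =>
        intro φ hφ
        rcases hφ with hφ | ⟨d, hd, rfl, hpre, hjust⟩
        · exact Or.inl (logClosure_mono ih hφ)
        · refine Or.inr ⟨d, hsub hd, rfl, fun a ha => ih (hpre a ha), ?_⟩
          intro b hb
          rw [hnorm d (hsub hd)] at hb
          rw [List.mem_singleton] at hb
          subst hb
          exact hnotneg d.concl (hEE' (hstE (i + 1) (Or.inr ⟨d, hd, rfl, hpre, hjust⟩)))
    -- every stage of (D', W) relative to E' is inside E'
    have hst' : ∀ i, extStage D' W E' i ⊆ E' := by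
      intro i
      induction i with
      | zero => exact fun x hx => hEE' (hstE 0 hx)
      | succ i ih =>
        intro φ hφ
        rcases hφ with hφ | ⟨d, hd, rfl, hpre, hjust⟩
        · exact hE'closed ▸ logClosure_mono ih hφ
        · by_contra hc
          have hpre' : ∀ a ∈ d.pre, a ∈ E' := fun a ha => ih (hpre a ha)
          have hneg := hnegmem d hd hpre' hc
          exact hjust d.concl (by rw [hnorm d hd]; exact List.mem_singleton_self _) hneg
    -- E is inside some stage of (D', W) relative to E'
    have hEstage' : ∃ N, E ⊆ extStage D' W E' (N + 1) := by
      have hCfin : (E ∩ (Default.concl '' D)).Finite :=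
        (hD.image _).subset Set.inter_subset_right
      have hCsub : E ∩ (Default.concl '' D) ⊆ ⋃ i, extStage D' W E' i := by
        intro x hx
        have hxE : x ∈ E := hx.1
        rw [hE] at hxE
        obtain ⟨i, hi⟩ := Set.mem_iUnion.mp hxE
        exact Set.mem_iUnion.mpr ⟨i, hDD' i hi⟩
      obtain ⟨N, hN⟩ := finite_subset_mono_iUnion hCfin (extStage_monotone D' W E') hCsub
      have hWN : W ⊆ extStage D' W E' N := extStage_monotone D' W E' (Nat.zero_le N)
      refine ⟨N, ?_⟩
      rw [hEeq]
      intro x hx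
      exact Or.inl (logClosure_mono (Set.union_subset hWN hN) hx)
    -- each chain stage is inside some stage of (D', W) relative to E'
    have hchain_stage : ∀ n, ∃ k, chain D' E n ⊆ extStage D' W E' k := by
      intro n
      induction n with
      | zero =>
        obtain ⟨N, hN⟩ := hEstage'
        exact ⟨N + 1, hN⟩
      | succ n ih =>
        obtain ⟨k, hk⟩ := ih
        by_cases h : ∃ d, d ∈ D' ∧ (∀ a ∈ d.pre, a ∈ chain D' E n) ∧
            d.concl ∉ chain D' E n ∧ (∃ v, Sat v (insert d.concl (chain D' E n)))
        · have heq : chain D' E (n + 1) = logClosure (insert h.choose.concl (chain D' E n)) := by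
            show gstep D' (chain D' E n) = _
            simp only [gstep, dif_pos h]
          obtain ⟨hd, hpre, hnot, hs⟩ := h.choose_spec
          have hcE' : h.choose.concl ∈ E' :=
            hchain_le (n + 1) (heq ▸ subset_logClosure (Set.mem_insert _ _))
          have hins : insert h.choose.concl (chain D' E n) ⊆ extStage D' W E' (k + 1) := by
            intro x hx
            rcases hx with rfl | hx
            · refine Or.inr ⟨h.choose, hd, rfl, fun a ha => hk (hpre a ha), ?_⟩
              intro b hb
              rw [hnorm _ hd] at hb
              rw [List.mem_singleton] at hb
              subst hb
              exact hnotneg _ hcE'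
            · exact Or.inl (subset_logClosure (hk hx))
          refine ⟨k + 2, ?_⟩
          rw [heq]
          exact fun x hx => Or.inl (logClosure_mono hins hx)
        · have heq : chain D' E (n + 1) = chain D' E n := by
            show gstep D' (chain D' E n) = _
            simp only [gstep, dif_neg h]
          exact ⟨k, heq ▸ hk⟩
    refine ⟨E', ?_, hEE'⟩
    apply subset_antisymm
    · obtain ⟨k, hk⟩ := hchain_stage m
      exact hk.trans (Set.subset_iUnion _ k)
    · exact Set.iUnion_subset hst'
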